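/- Let c be a random cluster drawn from the true clustering 𝒞 with probability proportional to positive weights p_c. Then the b-cubed recall satisfies R_{B³} = E[(1 − RUCE(c))/p_c] / E[1/p_c]. -/

import Mathlib

open Finset Filter Topology

/-- A clustering (partition) of a finite type of records, given by the block
containing each record. -/
structure Clustering (R : Type*) [Fintype R] [DecidableEq R] where
  blk : R → Finset R
  mem_blk : ∀ r, r ∈ blk r
  blk_eq : ∀ r r', r' ∈ blk r → blk r' = blk r

namespace Clustering

variable {R : Type*} [Fintype R] [DecidableEq R]

/-- The set of clusters (blocks) of the clustering. -/
def clusters (C : Clustering R) : Finset (Finset R) :=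
  Finset.univ.image C.blk

/-- The set of unordered pairs of distinct records lying in the same block. -/
def pairs (C : Clustering R) : Set (Sym2 R) :=
  {s | ¬ s.IsDiag ∧ ∀ a b : R, s = s(a, b) → a ∈ C.blk b}

/-- Expectation of `f (c)` when a random cluster `c` is drawn from `C.clusters`
with probability proportional to the positive weights `p`. -/
noncomputable def expect (C : Clustering R) (p : Finset R → ℝ) (f : Finset R → ℝ) : ℝ :=
  ∑ c ∈ C.clusters, (p c / ∑ c' ∈ C.clusters, p c') * f c

end Clustering

section Metrics

variable {R : Type*} [Fintype R] [DecidableEq R]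

/-- Record-wise underclustering error `UCE(r) = |c(r) \ ĉ(r)|`. -/
noncomputable def UCE (C Ch : Clustering R) (r : R) : ℝ := ((C.blk r) \ (Ch.blk r)).card

/-- Record-wise overclustering error `OCE(r) = |ĉ(r) \ c(r)|`. -/
noncomputable def OCE (C Ch : Clustering R) (r : R) : ℝ := ((Ch.blk r) \ (C.blk r)).card

/-- Record-wise size difference error `SDE(r) = |ĉ(r)| - |c(r)|`. -/
noncomputable def SDE (C Ch : Clustering R) (r : R) : ℝ :=
  ((Ch.blk r).card : ℝ) - ((C.blk r).card : ℝ)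

/-- Record-wise relative overclustering error. -/
noncomputable def ROCE (C Ch : Clustering R) (r : R) : ℝ := OCE C Ch r / ((Ch.blk r).card : ℝ)

/-- Record-wise relative underclustering error. -/
noncomputable def RUCE (C Ch : Clustering R) (r : R) : ℝ := UCE C Ch r / ((C.blk r).card : ℝ)

/-- Record-wise error indicator. -/
noncomputable def EI (C Ch : Clustering R) (r : R) : ℝ := if Ch.blk r = C.blk r then 0 else 1

/-- Cluster-wise average of a record-wise error metric:
`E(c) = (1/|c|) ∑_{r ∈ c} E(r)`. -/
noncomputable def clAvg (E : R → ℝ) (c : Finset R) : ℝ := (1 / (c.card : ℝ)) * ∑ r ∈ c, E r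

end Metrics

/-- Lemma 4 (b-cubed recall part). -/
theorem bcubed_recall_representation
    {R : Type*} [Fintype R] [DecidableEq R]
    (C Ch : Clustering R) (p : Finset R → ℝ)
    (hp : ∀ c ∈ C.clusters, 0 < p c) :
    (1 / (C.clusters.card : ℝ)) *
        ∑ c ∈ C.clusters, (1 / (c.card : ℝ)) *
          ∑ r ∈ c, ((C.blk r ∩ Ch.blk r).card : ℝ) / ((C.blk r).card : ℝ) =
      C.expect p (fun c => (1 - clAvg (RUCE C Ch) c) / p c) /
        C.expect p (fun c => 1 / p c) := by
  classical
  rcases eq_or_ne C.clusters ∅ with h | h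
  · simp [Clustering.expect, h]
  have hne : C.clusters.Nonempty := Finset.nonempty_iff_ne_empty.mpr h
  set S := ∑ c' ∈ C.clusters, p c' with hS
  have hSpos : 0 < S := Finset.sum_pos hp hne
  have hcard : (0:ℝ) < (C.clusters.card : ℝ) := by
    exact_mod_cast Finset.card_pos.mpr hne
  have key : ∀ c ∈ C.clusters,
      (1 / (c.card : ℝ)) * ∑ r ∈ c, ((C.blk r ∩ Ch.blk r).card : ℝ) / ((C.blk r).card : ℝ)
        = 1 - clAvg (RUCE C Ch) c := by
    intro c hc
    obtain ⟨r0, -, rfl⟩ := Finset.mem_image.mp hc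
    have hcpos : (0:ℝ) < ((C.blk r0).card : ℝ) := by
      exact_mod_cast Finset.card_pos.mpr ⟨r0, C.mem_blk r0⟩
    have hsum : ∑ r ∈ C.blk r0, ((C.blk r ∩ Ch.blk r).card : ℝ) / ((C.blk r).card : ℝ)
        = ∑ r ∈ C.blk r0, (1 - RUCE C Ch r) := by
      refine Finset.sum_congr rfl fun r hr => ?_
      have hb : C.blk r = C.blk r0 := C.blk_eq r0 r hr
      have h1 : ((C.blk r ∩ Ch.blk r).card : ℝ)
          = ((C.blk r).card : ℝ) - ((C.blk r \ Ch.blk r).card : ℝ) := by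
        have := Finset.card_inter_add_card_sdiff (C.blk r) (Ch.blk r)
        push_cast [← this]
        ring
      have hpos : ((C.blk r).card : ℝ) ≠ 0 := by rw [hb]; exact ne_of_gt hcpos
      rw [h1, RUCE, UCE]
      field_simp
    rw [hsum, Finset.sum_sub_distrib, Finset.sum_const, clAvg]
    field_simp
    rw [nsmul_eq_mul, mul_one]
  rw [Finset.sum_congr rfl key]
  have e1 : C.expect p (fun c => (1 - clAvg (RUCE C Ch) c) / p c)
      = (∑ c ∈ C.clusters, (1 - clAvg (RUCE C Ch) c)) / S := by
    rw [Clustering.expect, Finset.sum_div]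
    refine Finset.sum_congr rfl fun c hc => ?_
    have := (hp c hc).ne'
    field_simp
    rw [← hS]
    ring
    rw [mul_assoc, mul_inv_cancel₀ hSpos.ne']; ring
  have e2 : C.expect p (fun c => 1 / p c) = (C.clusters.card : ℝ) / S := by
    rw [Clustering.expect]
    rw [show (C.clusters.card : ℝ) / S = ∑ _c ∈ C.clusters, 1 / S by
      rw [Finset.sum_const]; ring]
    refine Finset.sum_congr rfl fun c hc => ?_
    have := (hp c hc).ne'
    field_simp
    rw [← hS]
    ring
    exact mul_inv_cancel₀ hSpos.ne'
  rw [e1, e2]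
  have h1 : S ≠ 0 := hSpos.ne'
  have h2 : (C.clusters.card : ℝ) ≠ 0 := hcard.ne'
  field_simp
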